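/- Let s_1 < s_2 < s_3 be real numbers, let 0 < n̄ < N be integers, and let BC_1,…,BC_{N+1} be independent real random variables with BC_n ~ N(S_n, 1), where S_n = s_1 for n = 1,…,n̄, S_n = s_2 for n = n̄+1,…,N, and S_{N+1} = s_3. If |s_3 − s_1| < 1/40 and |s_3 − s_1| > ((N − n̄)/(N − n̄ + 1))·|s_2 − s_1|, then the validity gap computed after discarding the first n̄ calibration scores, gap' = (1/(N − n̄ + 1))·Σ_{n=n̄+1}^N d_TV(BC_n, BC_{N+1}), is smaller than the validity gap computed from all N calibration scores, gap = (1/(N+1))·Σ_{n=1}^N d_TV(BC_n, BC_{N+1}). -/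

import Mathlib

open MeasureTheory ProbabilityTheory Finset

/-- Total variation distance between two measures on `ℝ`:
`d_TV(μ,ν) = sup over measurable sets B of |μ(B) − ν(B)|`. -/
noncomputable def dTV (μ ν : Measure ℝ) : ℝ :=
  ⨆ s : {s : Set ℝ // MeasurableSet s}, |(μ s.1).toReal - (ν s.1).toReal|

lemma gr_toReal (μ : ℝ) (B : Set ℝ) :
    ((gaussianReal μ 1) B).toReal = ∫ x in B, gaussianPDFReal μ 1 x := by
  rw [gaussianReal_apply_eq_integral μ one_ne_zero,
    ENNReal.toReal_ofReal (integral_nonneg fun x => gaussianPDFReal_nonneg _ _ _)]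

lemma pdf_le_of_ge {μ ν x : ℝ} (h : μ < ν) (hx : (μ + ν) / 2 ≤ x) :
    gaussianPDFReal μ 1 x ≤ gaussianPDFReal ν 1 x := by
  simp only [gaussianPDFReal, NNReal.coe_one, mul_one]
  apply mul_le_mul_of_nonneg_left _ (by positivity)
  apply Real.exp_le_exp.2
  rw [div_le_div_iff_of_pos_right (by norm_num : (0:ℝ) < 2)]
  nlinarith

lemma pdf_le_of_le {μ ν x : ℝ} (h : μ < ν) (hx : x ≤ (μ + ν) / 2) :
    gaussianPDFReal ν 1 x ≤ gaussianPDFReal μ 1 x := by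
  simp only [gaussianPDFReal, NNReal.coe_one, mul_one]
  apply mul_le_mul_of_nonneg_left _ (by positivity)
  apply Real.exp_le_exp.2
  rw [div_le_div_iff_of_pos_right (by norm_num : (0:ℝ) < 2)]
  nlinarith

noncomputable def Tgap (μ ν : ℝ) : ℝ :=
  ∫ x in Set.Iic ((μ + ν) / 2), (gaussianPDFReal μ 1 x - gaussianPDFReal ν 1 x)

lemma integ (μ : ℝ) : Integrable (gaussianPDFReal μ 1) := integrable_gaussianPDFReal μ 1

lemma setint_le_Iic {p q : ℝ → ℝ} (hp : Integrable p) (hq : Integrable q) {m : ℝ}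
    (h1 : ∀ x ≤ m, q x ≤ p x) (h2 : ∀ x, m ≤ x → p x ≤ q x)
    {B : Set ℝ} (hB : MeasurableSet B) :
    ∫ x in B, (p x - q x) ≤ ∫ x in Set.Iic m, (p x - q x) := by
  have hint : Integrable (fun x => p x - q x) := hp.sub hq
  have hsplit : (∫ x in B ∩ Set.Iic m, (p x - q x)) + ∫ x in B \ Set.Iic m, (p x - q x)
      = ∫ x in B, (p x - q x) := integral_inter_add_diff measurableSet_Iic hint.integrableOn
  have hA : ∫ x in B ∩ Set.Iic m, (p x - q x) ≤ ∫ x in Set.Iic m, (p x - q x) :=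
    setIntegral_mono_set hint.integrableOn
      ((ae_restrict_iff' measurableSet_Iic).2
        (Filter.Eventually.of_forall fun x hx => sub_nonneg.2 (h1 x hx)))
      (Filter.Eventually.of_forall Set.inter_subset_right)
  have hC : ∫ x in B \ Set.Iic m, (p x - q x) ≤ 0 :=
    setIntegral_nonpos (hB.diff measurableSet_Iic) fun x hx =>
      sub_nonpos.2 (h2 x (le_of_not_ge (by simpa using hx.2)))
  linarith

lemma setint_le_Ici {p q : ℝ → ℝ} (hp : Integrable p) (hq : Integrable q) {m : ℝ}
    (h1 : ∀ x ≤ m, p x ≤ q x) (h2 : ∀ x, m ≤ x → q x ≤ p x)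
    {B : Set ℝ} (hB : MeasurableSet B) :
    ∫ x in B, (p x - q x) ≤ ∫ x in Set.Ici m, (p x - q x) := by
  have hint : Integrable (fun x => p x - q x) := hp.sub hq
  have hsplit : (∫ x in B ∩ Set.Ici m, (p x - q x)) + ∫ x in B \ Set.Ici m, (p x - q x)
      = ∫ x in B, (p x - q x) := integral_inter_add_diff measurableSet_Ici hint.integrableOn
  have hA : ∫ x in B ∩ Set.Ici m, (p x - q x) ≤ ∫ x in Set.Ici m, (p x - q x) :=
    setIntegral_mono_set hint.integrableOn
      ((ae_restrict_iff' measurableSet_Ici).2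
        (Filter.Eventually.of_forall fun x hx => sub_nonneg.2 (h2 x hx)))
      (Filter.Eventually.of_forall Set.inter_subset_right)
  have hC : ∫ x in B \ Set.Ici m, (p x - q x) ≤ 0 :=
    setIntegral_nonpos (hB.diff measurableSet_Ici) fun x hx =>
      sub_nonpos.2 (h1 x (le_of_not_ge (by simpa using hx.2)))
  linarith

lemma abs_diff_le_Tgap {μ ν : ℝ} (h : μ < ν) (B : Set ℝ) (hB : MeasurableSet B) :
    |((gaussianReal μ 1) B).toReal - ((gaussianReal ν 1) B).toReal| ≤ Tgap μ ν := by
  set m := (μ + ν) / 2 with hm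
  have hBg : ((gaussianReal μ 1) B).toReal - ((gaussianReal ν 1) B).toReal
      = ∫ x in B, (gaussianPDFReal μ 1 x - gaussianPDFReal ν 1 x) := by
    rw [gr_toReal, gr_toReal, ← integral_sub (integ μ).integrableOn (integ ν).integrableOn]
  have hBg' : ((gaussianReal ν 1) B).toReal - ((gaussianReal μ 1) B).toReal
      = ∫ x in B, (gaussianPDFReal ν 1 x - gaussianPDFReal μ 1 x) := by
    rw [gr_toReal, gr_toReal, ← integral_sub (integ ν).integrableOn (integ μ).integrableOn]
  rw [abs_sub_le_iff]
  constructor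
  · rw [hBg]
    exact setint_le_Iic (integ μ) (integ ν) (fun x hx => pdf_le_of_le h hx)
      (fun x hx => pdf_le_of_ge h hx) hB
  · rw [hBg']
    have hle : ∫ x in B, (gaussianPDFReal ν 1 x - gaussianPDFReal μ 1 x)
        ≤ ∫ x in Set.Ici m, (gaussianPDFReal ν 1 x - gaussianPDFReal μ 1 x) :=
      setint_le_Ici (integ ν) (integ μ) (fun x hx => pdf_le_of_le h hx)
        (fun x hx => pdf_le_of_ge h hx) hB
    refine hle.trans_eq ?_
    have h0 : ∫ x, (gaussianPDFReal ν 1 x - gaussianPDFReal μ 1 x) = 0 := by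
      rw [integral_sub (integ ν) (integ μ), integral_gaussianPDFReal_eq_one ν one_ne_zero,
        integral_gaussianPDFReal_eq_one μ one_ne_zero]
      ring
    have hcompl : (∫ x in Set.Iic m, (gaussianPDFReal ν 1 x - gaussianPDFReal μ 1 x))
        + ∫ x in (Set.Iic m)ᶜ, (gaussianPDFReal ν 1 x - gaussianPDFReal μ 1 x)
        = ∫ x, (gaussianPDFReal ν 1 x - gaussianPDFReal μ 1 x) :=
      integral_add_compl measurableSet_Iic ((integ ν).sub (integ μ))
    have hIic : ∫ x in Set.Iic m, (gaussianPDFReal ν 1 x - gaussianPDFReal μ 1 x)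
        = - Tgap μ ν := by
      rw [Tgap, ← hm,
        integral_sub (integ ν).integrableOn (integ μ).integrableOn,
        integral_sub (integ μ).integrableOn (integ ν).integrableOn]
      ring
    have hIci : ∫ x in Set.Ici m, (gaussianPDFReal ν 1 x - gaussianPDFReal μ 1 x)
        = ∫ x in (Set.Iic m)ᶜ, (gaussianPDFReal ν 1 x - gaussianPDFReal μ 1 x) := by
      rw [Set.compl_Iic, ← integral_Ici_eq_integral_Ioi]
    linarith

lemma dTV_bddAbove (μ ν : Measure ℝ) [IsProbabilityMeasure μ] [IsProbabilityMeasure ν] :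
    BddAbove (Set.range fun s : {s : Set ℝ // MeasurableSet s} =>
      |(μ s.1).toReal - (ν s.1).toReal|) := by
  refine ⟨1, ?_⟩
  rintro x ⟨s, rfl⟩
  have h1 : (μ s.1).toReal ≤ 1 := by
    simpa using ENNReal.toReal_mono ENNReal.one_ne_top (prob_le_one (μ := μ) (s := s.1))
  have h2 : (ν s.1).toReal ≤ 1 := by
    simpa using ENNReal.toReal_mono ENNReal.one_ne_top (prob_le_one (μ := ν) (s := s.1))
  have h3 : 0 ≤ (μ s.1).toReal := ENNReal.toReal_nonneg
  have h4 : 0 ≤ (ν s.1).toReal := ENNReal.toReal_nonneg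
  rw [abs_le]; constructor <;> linarith

lemma dTV_nonneg (μ ν : Measure ℝ) [IsProbabilityMeasure μ] [IsProbabilityMeasure ν] :
    0 ≤ dTV μ ν := by
  have h := le_ciSup (dTV_bddAbove μ ν) (⟨∅, MeasurableSet.empty⟩ : {s : Set ℝ // MeasurableSet s})
  simp only [measure_empty] at h
  simpa [dTV] using le_trans (by simp) h

lemma dTV_le_Tgap {μ ν : ℝ} (h : μ < ν) :
    dTV (gaussianReal μ 1) (gaussianReal ν 1) ≤ Tgap μ ν :=
  ciSup_le fun s => abs_diff_le_Tgap h s.1 s.2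

lemma Tgap_le_dTV {μ ν : ℝ} (h : μ < ν) :
    Tgap μ ν ≤ dTV (gaussianReal μ 1) (gaussianReal ν 1) := by
  have hkey := le_ciSup (dTV_bddAbove (gaussianReal μ 1) (gaussianReal ν 1))
    (⟨Set.Iic ((μ + ν) / 2), measurableSet_Iic⟩ : {s : Set ℝ // MeasurableSet s})
  refine le_trans ?_ hkey
  have heq : ((gaussianReal μ 1) (Set.Iic ((μ + ν) / 2))).toReal
      - ((gaussianReal ν 1) (Set.Iic ((μ + ν) / 2))).toReal = Tgap μ ν := by
    rw [gr_toReal, gr_toReal, ← integral_sub (integ μ).integrableOn (integ ν).integrableOn]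
    rfl
  rw [← heq]
  exact le_abs_self _

lemma gr_Iic_shift (μ t : ℝ) :
    (gaussianReal μ 1) (Set.Iic t) = (gaussianReal 0 1) (Set.Iic (t - μ)) := by
  have hmap := gaussianReal_map_add_const (μ := 0) (v := 1) μ
  rw [zero_add] at hmap
  rw [← hmap, Measure.map_apply (measurable_add_const μ) measurableSet_Iic,
    Set.preimage_add_const_Iic]

lemma Phi_lt {a b : ℝ} (h : a < b) :
    ((gaussianReal 0 1) (Set.Iic a)).toReal < ((gaussianReal 0 1) (Set.Iic b)).toReal := by
  rw [gr_toReal, gr_toReal]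
  have hsplit : (∫ x in Set.Iic a, gaussianPDFReal 0 1 x)
      + ∫ x in Set.Ioc a b, gaussianPDFReal 0 1 x
      = ∫ x in Set.Iic b, gaussianPDFReal 0 1 x := by
    rw [← setIntegral_union (Set.Iic_disjoint_Ioc le_rfl) measurableSet_Ioc
      (integ 0).integrableOn (integ 0).integrableOn, Set.Iic_union_Ioc_eq_Iic h.le]
  have hpos : 0 < ∫ x in Set.Ioc a b, gaussianPDFReal 0 1 x := by
    rw [← intervalIntegral.integral_of_le h.le]
    exact intervalIntegral.intervalIntegral_pos_of_pos_on
      ((integ 0).intervalIntegrable) (fun x _ => gaussianPDFReal_pos _ _ _ one_ne_zero) h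
  linarith

lemma Tgap_eq {μ ν : ℝ} :
    Tgap μ ν = ((gaussianReal 0 1) (Set.Iic ((ν - μ) / 2))).toReal
      - ((gaussianReal 0 1) (Set.Iic (-((ν - μ) / 2)))).toReal := by
  have heq : Tgap μ ν = ((gaussianReal μ 1) (Set.Iic ((μ + ν) / 2))).toReal
      - ((gaussianReal ν 1) (Set.Iic ((μ + ν) / 2))).toReal := by
    rw [gr_toReal, gr_toReal, ← integral_sub (integ μ).integrableOn (integ ν).integrableOn]
    rfl
  rw [heq, gr_Iic_shift μ, gr_Iic_shift ν]
  have e1 : (μ + ν) / 2 - μ = (ν - μ) / 2 := by ring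
  have e2 : (μ + ν) / 2 - ν = -((ν - μ) / 2) := by ring
  rw [e1, e2]

lemma Tgap_pos {μ ν : ℝ} (h : μ < ν) : 0 < Tgap μ ν := by
  rw [Tgap_eq]
  have : -((ν - μ) / 2) < (ν - μ) / 2 := by linarith
  linarith [Phi_lt this]

lemma Tgap_lt {μ₁ μ₂ ν : ℝ} (h1 : μ₁ < μ₂) (h2 : μ₂ < ν) : Tgap μ₂ ν < Tgap μ₁ ν := by
  rw [Tgap_eq, Tgap_eq]
  have hA : ((gaussianReal 0 1) (Set.Iic ((ν - μ₂) / 2))).toReal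
      < ((gaussianReal 0 1) (Set.Iic ((ν - μ₁) / 2))).toReal := Phi_lt (by linarith)
  have hB : ((gaussianReal 0 1) (Set.Iic (-((ν - μ₁) / 2)))).toReal
      < ((gaussianReal 0 1) (Set.Iic (-((ν - μ₂) / 2)))).toReal := Phi_lt (by linarith)
  linarith

/-- Calibration-sample selection (Lemma on sample selection with an ordinal
feature): with independent scores `BC_n ~ N(S_n, 1)`, `S_n = s₁` for the first
`n̄` calibration scores, `S_n = s₂` for the remaining `N − n̄`, and `s₃` for the
test score, if `|s₃ − s₁| < 1/40` and
`|s₃ − s₁| > ((N − n̄)/(N − n̄ + 1))·|s₂ − s₁|`, then discarding the first `n̄`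
calibration scores reduces the validity gap:
`(1/(N − n̄ + 1))·Σ_{n=n̄+1}^N d_TV(BC_n, BC_{N+1}) <
 (1/(N+1))·Σ_{n=1}^N d_TV(BC_n, BC_{N+1})`.
Indices `0,…,N-1` are the calibration scores and `N` is the test score. -/
theorem sample_selection_reduces_gap
    {Ω : Type*} [MeasurableSpace Ω] (P : Measure Ω) [IsProbabilityMeasure P]
    (N nbar : ℕ) (hnbar0 : 0 < nbar) (hnbarN : nbar < N)
    (s₁ s₂ s₃ : ℝ) (h12 : s₁ < s₂) (h23 : s₂ < s₃)
    (S : ℕ → ℝ)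
    (hS1 : ∀ n < nbar, S n = s₁)
    (hS2 : ∀ n, nbar ≤ n → n < N → S n = s₂)
    (hS3 : S N = s₃)
    (BC : ℕ → Ω → ℝ) (hmeas : ∀ n, Measurable (BC n))
    (hindep : iIndepFun (fun n : Fin (N + 1) => BC n) P)
    (hgauss : ∀ n ≤ N, P.map (BC n) = gaussianReal (S n) 1)
    (hsmall : |s₃ - s₁| < 1 / 40)
    (hlarge : |s₃ - s₁| >
      (((N : ℝ) - nbar) / ((N : ℝ) - nbar + 1)) * |s₂ - s₁|) :
    (1 / ((N : ℝ) - nbar + 1)) *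
        ∑ n ∈ Finset.Ico nbar N, dTV (P.map (BC n)) (P.map (BC N)) <
      (1 / ((N : ℝ) + 1)) *
        ∑ n ∈ Finset.range N, dTV (P.map (BC n)) (P.map (BC N)) := by
  have h13 : s₁ < s₃ := h12.trans h23
  set a := dTV (gaussianReal s₁ 1) (gaussianReal s₃ 1) with ha
  set b := dTV (gaussianReal s₂ 1) (gaussianReal s₃ 1) with hb
  have hba : b < a :=
    lt_of_le_of_lt (dTV_le_Tgap h23) (lt_of_lt_of_le (Tgap_lt h12 h23) (Tgap_le_dTV h13))
  have hapos : 0 < a := lt_of_lt_of_le (Tgap_pos h13) (Tgap_le_dTV h13)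
  have hb0 : 0 ≤ b := dTV_nonneg _ _
  have hmapN : P.map (BC N) = gaussianReal s₃ 1 := by rw [hgauss N le_rfl, hS3]
  have hsum2 : ∑ n ∈ Finset.Ico nbar N, dTV (P.map (BC n)) (P.map (BC N))
      = (N - nbar : ℕ) * b := by
    rw [Finset.sum_congr rfl fun n hn => ?_, Finset.sum_const, Nat.card_Ico,
      nsmul_eq_mul]
    rw [Finset.mem_Ico] at hn
    rw [hmapN, hgauss n hn.2.le, hS2 n hn.1 hn.2]
  have hsum1 : ∑ n ∈ Finset.range nbar, dTV (P.map (BC n)) (P.map (BC N))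
      = (nbar : ℕ) * a := by
    rw [Finset.sum_congr rfl fun n hn => ?_, Finset.sum_const, Finset.card_range, nsmul_eq_mul]
    rw [Finset.mem_range] at hn
    rw [hmapN, hgauss n (hn.trans hnbarN).le, hS1 n hn]
  have hsplit : ∑ n ∈ Finset.range N, dTV (P.map (BC n)) (P.map (BC N))
      = (∑ n ∈ Finset.range nbar, dTV (P.map (BC n)) (P.map (BC N)))
        + ∑ n ∈ Finset.Ico nbar N, dTV (P.map (BC n)) (P.map (BC N)) :=
    (Finset.sum_range_add_sum_Ico _ hnbarN.le).symm
  rw [hsplit, hsum1, hsum2]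
  have hcast : ((N - nbar : ℕ) : ℝ) = (N : ℝ) - (nbar : ℝ) := by
    rw [Nat.cast_sub hnbarN.le]
  rw [hcast]
  set k := (nbar : ℝ) with hk
  set M := (N : ℝ) - k with hM
  have hk1 : (1 : ℝ) ≤ k := Nat.one_le_cast.2 hnbar0
  have hM1 : (1 : ℝ) ≤ M := by
    have : (nbar : ℝ) + 1 ≤ (N : ℝ) := by exact_mod_cast hnbarN
    simp only [hM]; linarith
  have hN : (N : ℝ) = k + M := by simp [hM]
  rw [hN]
  have hd1 : (0 : ℝ) < M + 1 := by linarith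
  have hd2 : (0 : ℝ) < k + M + 1 := by linarith
  rw [one_div_mul_eq_div, one_div_mul_eq_div, div_lt_div_iff₀ hd1 hd2]
  nlinarith [mul_le_mul_of_nonneg_left hba.le (mul_nonneg (by linarith : (0:ℝ) ≤ k)
      (by linarith : (0:ℝ) ≤ M)), mul_pos (by linarith : (0:ℝ) < k) hapos,
    mul_nonneg (by linarith : (0:ℝ) ≤ M) hb0]
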